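/- Let B be an n×m matrix over F₂, z ∈ F₂ⁿ, k a positive integer, γ ≥ 1 a real number, and a a positive integer with (a : ℝ) > γ·k. Let A be the (a·n)×m matrix over F₂ obtained by vertically stacking a copies of B, and y ∈ F₂^{a·n} the vector obtained by stacking a copies of z. Then: (1) if there exists x ∈ F₂^m with ‖x‖₀ ≤ k and B·x = z, then there exists x ∈ F₂^m with ‖A·x − y‖₀ + ‖x‖₀ ≤ k; and (2) if B·x ≠ z for every x ∈ F₂^m with ‖x‖₀ ≤ γ·k, then ‖A·x − y‖₀ + ‖x‖₀ > γ·k for every x ∈ F₂^m. -/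
import Mathlib


theorem stmt8 (n m k a : ℕ) (hn : 0 < n) (hm : 0 < m) (hk : 0 < k) (ha : 0 < a)
    (γ : ℝ) (hγ : 1 ≤ γ) (haγ : (a : ℝ) > γ * k)
    (B : Matrix (Fin n) (Fin m) (ZMod 2)) (z : Fin n → ZMod 2)
    (A : Matrix (Fin a × Fin n) (Fin m) (ZMod 2))
    (hA : A = Matrix.of fun p j => B p.2 j)
    (y : Fin a × Fin n → ZMod 2) (hy : y = fun p => z p.2) :
    ((∃ x : Fin m → ZMod 2, hammingNorm x ≤ k ∧ B.mulVec x = z) →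
      ∃ x : Fin m → ZMod 2, hammingNorm (A.mulVec x - y) + hammingNorm x ≤ k) ∧
    ((∀ x : Fin m → ZMod 2, (hammingNorm x : ℝ) ≤ γ * k → B.mulVec x ≠ z) →
      ∀ x : Fin m → ZMod 2,
        γ * k < ((hammingNorm (A.mulVec x - y) + hammingNorm x : ℕ) : ℝ)) := by
  have hAv : ∀ x (p : Fin a × Fin n), A.mulVec x p = B.mulVec x p.2 := by
    intro x p
    simp [hA, Matrix.mulVec, dotProduct]
  constructor
  · rintro ⟨x, hx, hBx⟩
    refine ⟨x, ?_⟩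
    have : A.mulVec x - y = 0 := by
      funext p
      simp [hAv, hBx, hy]
    simp [this, hx]
  · intro h x
    by_cases hx : (hammingNorm x : ℝ) ≤ γ * k
    · have hne := h x hx
      obtain ⟨i, hi⟩ : ∃ i, B.mulVec x i ≠ z i := by
        by_contra hc
        push_neg at hc
        exact hne (funext hc)
      have hcard : a ≤ hammingNorm (A.mulVec x - y) := by
        have : (Finset.univ.image (fun t : Fin a => (t, i))).card ≤
            (Finset.univ.filter (fun p : Fin a × Fin n => (A.mulVec x - y) p ≠ 0)).card := by
          apply Finset.card_le_card
          intro p hp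
          simp only [Finset.mem_image, Finset.mem_univ, true_and] at hp
          obtain ⟨t, ht⟩ := hp
          simp only [Finset.mem_filter, Finset.mem_univ, true_and, ← ht]
          simpa [hAv, hy, sub_eq_zero] using hi
        rw [Finset.card_image_of_injective _ (fun s t hst => (Prod.mk.injEq _ _ _ _ ▸ hst).1)] at this
        simpa [hammingNorm] using this
      calc γ * k < (a : ℝ) := haγ
        _ ≤ (hammingNorm (A.mulVec x - y) : ℝ) := by exact_mod_cast hcard
        _ ≤ _ := by push_cast; linarith [Nat.cast_nonneg (α := ℝ) (hammingNorm x)]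
    · push_neg at hx
      have : (hammingNorm x : ℝ) ≤ ((hammingNorm (A.mulVec x - y) + hammingNorm x : ℕ) : ℝ) := by
        push_cast; linarith [Nat.cast_nonneg (α := ℝ) (hammingNorm (A.mulVec x - y))]
      linarith
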